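/- Define b_n = binom(n, n/2) for even n, b_n = 0 for odd n, and c_n = (2/(n+2))·binom(n, n/2) for even n, c_n = 0 for odd n. Then for all n ≥ 0, ∑_{r=0}^{n} binom(n, r) · b_r · c_{n−r} = (1/2) · c_n · b_{n+2}. -/

import Mathlib

/-- The central binomial sequence interleaved with zeros. -/
def bSeq (n : ℕ) : ℚ := if Even n then (n.choose (n / 2) : ℚ) else 0

/-- The Catalan sequence interleaved with zeros. -/
noncomputable def cSeq (n : ℕ) : ℚ :=
  if Even n then (2 / ((n : ℚ) + 2)) * (n.choose (n / 2) : ℚ) else 0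

lemma keyL1 (m k : ℕ) (hk : k ≤ m) :
    (((2*m).choose (2*k) : ℚ)) * ((2*k).choose k) * ((2*(m-k)).choose (m-k)) =
      ((2*m).choose m) * ((m.choose k))^2 := by
  have h1 : 2*k ≤ 2*m := by omega
  have h2 : k ≤ 2*k := by omega
  have h3 : m - k ≤ 2*(m-k) := by omega
  have h4 : m ≤ 2*m := by omega
  rw [Nat.cast_choose ℚ h1, Nat.cast_choose ℚ h2, Nat.cast_choose ℚ h3,
    Nat.cast_choose ℚ h4, Nat.cast_choose ℚ hk]
  have e1 : 2*m - 2*k = 2*(m-k) := by omega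
  have e2 : 2*k - k = k := by omega
  have e3 : 2*(m-k) - (m-k) = m - k := by omega
  have e4 : 2*m - m = m := by omega
  rw [e1, e2, e3, e4]
  have f1 : ((2*(m-k)).factorial : ℚ) ≠ 0 := by positivity
  have f2 : ((2*k).factorial : ℚ) ≠ 0 := by positivity
  have f3 : ((m-k).factorial : ℚ) ≠ 0 := by positivity
  have f4 : ((k).factorial : ℚ) ≠ 0 := by positivity
  have f5 : ((m).factorial : ℚ) ≠ 0 := by positivity
  field_simp

lemma keyL2 (m k : ℕ) (hk : k ≤ m) :
    (m.choose k : ℚ) / ((m : ℚ) - k + 1) = ((m+1).choose k : ℚ) / (m+1) := by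
  have h := Nat.choose_mul_succ_eq m k
  have hc : ((m : ℚ) - k + 1) = ((m + 1 - k : ℕ) : ℚ) := by
    have : k ≤ m + 1 := by omega
    push_cast [this]; ring
  have hpos : ((m + 1 - k : ℕ) : ℚ) ≠ 0 := by
    have : 0 < m + 1 - k := by omega
    exact_mod_cast this.ne'
  have hm1 : ((m : ℚ) + 1) ≠ 0 := by positivity
  rw [hc, div_eq_div_iff hpos hm1]
  exact_mod_cast congrArg (Nat.cast : ℕ → ℚ) h

lemma keyL3 (m : ℕ) :
    ∑ k ∈ Finset.range (m+1), (m.choose k : ℚ) * ((m+1).choose k : ℚ)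
      = ((2*m+1).choose m : ℚ) := by
  have hnat : ∑ k ∈ Finset.range (m+2), m.choose k * (m+1).choose (m+1-k)
      = (2*m+1).choose (m+1) := by
    have := Nat.add_choose_eq m (m+1) (m+1)
    rw [Finset.Nat.sum_antidiagonal_eq_sum_range_succ_mk] at this
    rw [← this]; congr 1; omega
  rw [Finset.sum_range_succ, Nat.choose_eq_zero_of_lt (show m < m + 1 by omega),
    zero_mul, add_zero] at hnat
  have hsym : ∀ k ∈ Finset.range (m+1),
      (m.choose k : ℚ) * ((m+1).choose k : ℚ)
        = ((m.choose k * (m+1).choose (m+1-k) : ℕ) : ℚ) := by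
    intro k hk
    rw [Finset.mem_range] at hk
    rw [Nat.choose_symm (show k ≤ m + 1 by omega)]
    push_cast; ring
  rw [Finset.sum_congr rfl hsym, ← Nat.cast_sum, hnat, Nat.choose_symm_half]

/-- Binomial convolution identity
`∑_{r=0}^n binom(n,r) b_r c_{n-r} = (1/2) c_n b_{n+2}`. -/
theorem binomial_convolution_bSeq_cSeq (n : ℕ) :
    ∑ r ∈ Finset.range (n + 1), (n.choose r : ℚ) * bSeq r * cSeq (n - r) =
      (1 / 2) * cSeq n * bSeq (n + 2) := by
  rcases Nat.even_or_odd n with he | ho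
  swap
  · -- odd case
    have hn : ¬ Even n := Nat.not_even_iff_odd.mpr ho
    rw [Finset.sum_eq_zero, cSeq, if_neg hn, mul_zero, zero_mul]
    intro r hr
    rw [Finset.mem_range] at hr
    by_cases h : Even r
    · have hodd : ¬ Even (n - r) := by
        rw [Nat.even_iff] at h ⊢
        rw [Nat.odd_iff] at ho
        omega
      rw [cSeq, if_neg hodd, mul_zero]
    · rw [bSeq, if_neg h, mul_zero, zero_mul]
  · obtain ⟨m, hm⟩ := he
    have hm' : n = 2 * m := by omega
    subst hm'
    -- reduce to even indices
    have hfilter : ∑ r ∈ (Finset.range (2*m+1)).filter (fun r => Even r),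
        ((2*m).choose r : ℚ) * bSeq r * cSeq (2*m - r)
        = ∑ r ∈ Finset.range (2*m+1), ((2*m).choose r : ℚ) * bSeq r * cSeq (2*m - r) := by
      apply Finset.sum_filter_of_ne
      intro r _ hne
      by_contra h
      exact hne (by rw [bSeq, if_neg h, mul_zero, zero_mul])
    rw [← hfilter]
    have hbij : ∑ r ∈ (Finset.range (2*m+1)).filter (fun r => Even r),
        ((2*m).choose r : ℚ) * bSeq r * cSeq (2*m - r)
        = ∑ k ∈ Finset.range (m+1),
            ((2*m).choose (2*k) : ℚ) * bSeq (2*k) * cSeq (2*m - 2*k) := by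
      apply Finset.sum_nbij' (fun r => r / 2) (fun k => 2 * k)
      · intro r hr
        simp only [Finset.mem_filter, Finset.mem_range] at hr
        rw [Finset.mem_range]
        obtain ⟨h1, k, hk⟩ := hr
        omega
      · intro k hk
        rw [Finset.mem_range] at hk
        simp only [Finset.mem_filter, Finset.mem_range]
        exact ⟨by omega, even_two_mul k⟩
      · intro r hr
        simp only [Finset.mem_filter, Finset.mem_range] at hr
        obtain ⟨h1, k, hk⟩ := hr
        omega
      · intro k _; omega
      · intro r hr
        simp only [Finset.mem_filter, Finset.mem_range] at hr
        obtain ⟨h1, k, hk⟩ := hr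
        have : 2 * (r / 2) = r := by omega
        rw [this]
    rw [hbij]
    -- compute each term
    have hterm : ∀ k ∈ Finset.range (m+1),
        ((2*m).choose (2*k) : ℚ) * bSeq (2*k) * cSeq (2*m - 2*k)
          = ((2*m).choose m : ℚ) / ((m : ℚ) + 1)
              * ((m.choose k : ℚ) * ((m+1).choose k : ℚ)) := by
      intro k hk
      rw [Finset.mem_range] at hk
      have hk' : k ≤ m := by omega
      have e : 2*m - 2*k = 2*(m-k) := by omega
      rw [e]
      rw [bSeq, if_pos (even_two_mul k), cSeq, if_pos (even_two_mul (m-k))]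
      rw [Nat.mul_div_cancel_left k (by norm_num), Nat.mul_div_cancel_left (m-k) (by norm_num)]
      have hcast : ((2*(m-k) : ℕ) : ℚ) = 2*((m : ℚ) - k) := by
        push_cast [hk']; ring
      have hx : ((m : ℚ) - k + 1) ≠ 0 := by
        have : (k : ℚ) ≤ m := by exact_mod_cast hk'
        intro h; linarith
      have hc2 : (2 : ℚ) / (((2*(m-k) : ℕ) : ℚ) + 2) = 1 / ((m : ℚ) - k + 1) := by
        rw [hcast, div_eq_div_iff (by intro h; apply hx; linarith) hx]
        ring
      rw [hc2]
      calc ((2*m).choose (2*k) : ℚ) * ((2*k).choose k)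
              * (1 / ((m : ℚ) - k + 1) * ((2*(m-k)).choose (m-k)))
          = (((2*m).choose (2*k) : ℚ) * ((2*k).choose k) * ((2*(m-k)).choose (m-k)))
              * (1 / ((m : ℚ) - k + 1)) := by ring
        _ = (((2*m).choose m : ℚ) * (m.choose k)^2) * (1 / ((m : ℚ) - k + 1)) := by
              rw [keyL1 m k hk']
        _ = ((2*m).choose m : ℚ) * (m.choose k) * ((m.choose k : ℚ) / ((m : ℚ) - k + 1)) := by
              ring
        _ = ((2*m).choose m : ℚ) * (m.choose k) * (((m+1).choose k : ℚ) / ((m : ℚ) + 1)) := by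
              rw [keyL2 m k hk']
        _ = ((2*m).choose m : ℚ) / ((m : ℚ) + 1) * ((m.choose k : ℚ) * ((m+1).choose k : ℚ)) := by
              ring
    rw [Finset.sum_congr rfl hterm, ← Finset.mul_sum, keyL3]
    -- right-hand side
    rw [cSeq, if_pos (even_two_mul m), bSeq,
      if_pos (by exact (even_two_mul m).add (even_two_mul 1) : Even (2*m+2))]
    rw [Nat.mul_div_cancel_left m (by norm_num)]
    have hdiv : (2*m+2)/2 = m + 1 := by omega
    rw [hdiv]
    have hch : ((2*m+2).choose (m+1) : ℚ) = 2 * ((2*m+1).choose m : ℚ) := by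
      have : (2*m+2).choose (m+1) = (2*m+1).choose m + (2*m+1).choose (m+1) := by
        exact Nat.choose_succ_succ (2*m+1) m
      rw [this, Nat.choose_symm_half]
      push_cast; ring
    rw [hch]
    have hm1 : ((m : ℚ) + 1) ≠ 0 := by positivity
    have hm2 : ((2*m : ℕ) : ℚ) + 2 ≠ 0 := by positivity
    field_simp
    push_cast; ring
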